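/- Let k be an algebraically closed field of characteristic 0, and let a, b ∈ kˣ be elements that are not roots of unity such that there exist no nonzero integers r₁ and r₂ with a^{r₁} = b^{r₂}. Let φ̂ : k² → k² be the map φ̂(x, y) = (a x, b y). Then every Zariski-closed subset S ⊆ k² with φ̂(S) = S is one of the following six sets: ∅, {(0,0)}, {(x,y) : x = 0}, {(x,y) : y = 0}, {(x,y) : x y = 0}, or k². -/

import Mathlib

open MvPolynomial

/-- A subset of the plane is Zariski closed if it is the common zero locus of an ideal of
polynomials. -/
def IsZariskiClosed {k : Type*} [Field k] (S : Set (Fin 2 → k)) : Prop :=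
  ∃ I : Ideal (MvPolynomial (Fin 2) k), S = {p | ∀ f ∈ I, eval p f = 0}

private lemma aux_zpow_eq_one {G : Type*} [Group G] {c : G}
    (hc : ∀ m : ℕ, 0 < m → c ^ m ≠ 1) {r : ℤ} (h : c ^ r = 1) : r = 0 := by
  by_contra hr
  have hpos : 0 < r.natAbs := Int.natAbs_pos.mpr hr
  rcases Int.natAbs_eq r with he | he
  · exact hc r.natAbs hpos (by rw [← zpow_natCast, ← he, h])
  · refine hc r.natAbs hpos ?_
    have h2 : c ^ (-(r.natAbs : ℤ)) = 1 := by rw [← he, h]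
    rwa [zpow_neg, inv_eq_one, zpow_natCast] at h2

private lemma aux_eval_bind₁ {k : Type*} [CommSemiring k] (p : Fin 2 → k)
    (g : Fin 2 → MvPolynomial (Fin 2) k) (f : MvPolynomial (Fin 2) k) :
    eval p (bind₁ g f) = eval (fun i => eval p (g i)) f := by
  exact eval₂Hom_bind₁ (RingHom.id k) p g f

theorem stmt17 {k : Type*} [Field k] [IsAlgClosed k] [CharZero k]
    (a b : kˣ)
    (ha : ∀ m : ℕ, 0 < m → a ^ m ≠ 1) (hb : ∀ m : ℕ, 0 < m → b ^ m ≠ 1)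
    (hab : ∀ r₁ r₂ : ℤ, r₁ ≠ 0 → r₂ ≠ 0 → a ^ r₁ ≠ b ^ r₂)
    (S : Set (Fin 2 → k)) (hS : IsZariskiClosed S)
    (hinv : (fun p : Fin 2 → k => ![(a : k) * p 0, (b : k) * p 1]) '' S = S) :
    S = ∅ ∨ S = {p | p 0 = 0 ∧ p 1 = 0} ∨ S = {p | p 0 = 0} ∨ S = {p | p 1 = 0} ∨
      S = {p | p 0 * p 1 = 0} ∨ S = Set.univ := by
  classical
  obtain ⟨I, hI⟩ := hS
  -- the "vanishing on S" predicate
  let V : MvPolynomial (Fin 2) k → Prop := fun f => ∀ p ∈ S, eval p f = 0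
  have hSV : S = {p | ∀ f, V f → eval p f = 0} := by
    ext p
    constructor
    · exact fun hp f hf => hf p hp
    · intro hp
      rw [hI]
      intro f hf
      exact hp f (fun q hq => by rw [hI] at hq; exact hq f hf)
  -- evaluation of monomials
  have hm : ∀ (p : Fin 2 → k) (d : Fin 2 →₀ ℕ) (c : k),
      eval p (monomial d c) = c * (p 0 ^ d 0 * p 1 ^ d 1) := by
    intro p d c
    rw [eval_monomial, Finsupp.prod_pow, Fin.prod_univ_two]
  -- the eigenvalue function
  let Λ : (Fin 2 →₀ ℕ) → k := fun d => (a : k) ^ (d 0) * (b : k) ^ (d 1)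
  have hΛinj : Function.Injective Λ := by
    intro d e h
    have hu : (a ^ (d 0) * b ^ (d 1) : kˣ) = a ^ (e 0) * b ^ (e 1) := by
      apply Units.ext
      simpa [Units.val_mul, Units.val_pow_eq_pow_val] using h
    have hz : (a : kˣ) ^ (d 0 : ℤ) * (b : kˣ) ^ (d 1 : ℤ)
        = (a : kˣ) ^ (e 0 : ℤ) * (b : kˣ) ^ (e 1 : ℤ) := by
      simpa [zpow_natCast] using hu
    have key : (a : kˣ) ^ ((d 0 : ℤ) - (e 0 : ℤ)) = (b : kˣ) ^ ((e 1 : ℤ) - (d 1 : ℤ)) := by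
      have hd0 : (d 0 : ℤ) - (e 0 : ℤ) + (e 0 : ℤ) = (d 0 : ℤ) := by ring
      have hd1 : (e 1 : ℤ) - (d 1 : ℤ) + (d 1 : ℤ) = (e 1 : ℤ) := by ring
      have l1 : (a : kˣ) ^ ((d 0 : ℤ) - (e 0 : ℤ)) * ((a : kˣ) ^ (e 0 : ℤ) * (b : kˣ) ^ (d 1 : ℤ))
          = (a : kˣ) ^ (e 0 : ℤ) * (b : kˣ) ^ (e 1 : ℤ) := by
        rw [← mul_assoc, ← zpow_add, hd0]
        exact hz
      have l2 : (b : kˣ) ^ ((e 1 : ℤ) - (d 1 : ℤ)) * ((a : kˣ) ^ (e 0 : ℤ) * (b : kˣ) ^ (d 1 : ℤ))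
          = (a : kˣ) ^ (e 0 : ℤ) * (b : kˣ) ^ (e 1 : ℤ) := by
        rw [mul_comm ((a : kˣ) ^ (e 0 : ℤ)) ((b : kˣ) ^ (d 1 : ℤ)), ← mul_assoc, ← zpow_add, hd1,
          mul_comm]
      exact mul_right_cancel (l1.trans l2.symm)
    rcases eq_or_ne ((d 0 : ℤ) - (e 0 : ℤ)) 0 with h1 | h1
    · have h2 : ((e 1 : ℤ) - (d 1 : ℤ)) = 0 :=
        aux_zpow_eq_one hb (by rw [← key, h1, zpow_zero])
      have e0 : d 0 = e 0 := by omega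
      have e1 : d 1 = e 1 := by omega
      ext i
      fin_cases i
      · exact e0
      · exact e1
    · rcases eq_or_ne ((e 1 : ℤ) - (d 1 : ℤ)) 0 with h2 | h2
      · exact absurd (aux_zpow_eq_one ha (by rw [key, h2, zpow_zero])) h1
      · exact absurd key (hab _ _ h1 h2)
  -- the pullback map
  let v : Fin 2 → k := ![(a : k), (b : k)]
  let T : MvPolynomial (Fin 2) k →ₐ[k] MvPolynomial (Fin 2) k :=
    bind₁ (fun i : Fin 2 => C (v i) * X i)
  have hTmon : ∀ (d : Fin 2 →₀ ℕ) (r : k), T (monomial d r) = monomial d (Λ d * r) := by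
    intro d r
    show bind₁ (fun i : Fin 2 => C (v i) * X i) (monomial d r) = _
    rw [bind₁_monomial]
    have hsplit : ∀ i ∈ d.support, (C (v i) * X i : MvPolynomial (Fin 2) k) ^ d i
        = C (v i ^ d i) * X i ^ d i := by
      intro i _
      rw [mul_pow, C_pow]
    rw [Finset.prod_congr rfl hsplit, Finset.prod_mul_distrib,
      ← map_prod (C : k →+* MvPolynomial (Fin 2) k)]
    have hprod : (∏ i ∈ d.support, v i ^ d i) = Λ d := by
      have : (∏ i ∈ d.support, v i ^ d i) = d.prod fun i e => v i ^ e := rfl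
      rw [this, Finsupp.prod_pow, Fin.prod_univ_two]
      show v 0 ^ d 0 * v 1 ^ d 1 = (a : k) ^ d 0 * (b : k) ^ d 1
      simp [v]
    rw [hprod, monomial_eq]
    rw [show (Finsupp.prod d fun n e => (X n : MvPolynomial (Fin 2) k) ^ e)
        = ∏ i ∈ d.support, (X i : MvPolynomial (Fin 2) k) ^ d i from rfl]
    simp only [map_mul]
    ring
  have hcoeff : ∀ (f : MvPolynomial (Fin 2) k) (d), coeff d (T f) = Λ d * coeff d f := by
    intro f
    induction f using MvPolynomial.induction_on' with
    | monomial u r =>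
      intro d
      rw [hTmon, coeff_monomial, coeff_monomial]
      split_ifs with h
      · subst h; rfl
      · rw [mul_zero]
    | add p q hp hq =>
      intro d
      rw [map_add, coeff_add, coeff_add, hp, hq, mul_add]
  have hTV : ∀ f, V f → V (T f) := by
    intro f hf p hp
    have heval : eval p (T f) = eval (fun i => v i * p i) f := by
      show eval p (bind₁ (fun i : Fin 2 => C (v i) * X i) f) = _
      rw [aux_eval_bind₁]
      have hfun : (fun i => eval p ((C (v i) * X i : MvPolynomial (Fin 2) k)))
          = fun i => v i * p i := by
        funext i
        simp
      rw [hfun]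
    rw [heval]
    apply hf
    rw [← hinv]
    refine ⟨p, hp, ?_⟩
    funext i
    fin_cases i <;> simp [v]
  have hVsub : ∀ f g, V f → V g → V (f - g) := fun f g hf hg p hp => by
    rw [map_sub, hf p hp, hg p hp, sub_zero]
  have hVC : ∀ (c : k) f, V f → V (C c * f) := fun c f hf p hp => by
    rw [map_mul, hf p hp, mul_zero]
  -- key step: each monomial of a vanishing polynomial vanishes
  have main : ∀ (n : ℕ) (f : MvPolynomial (Fin 2) k), f.support.card ≤ n → V f →
      ∀ d ∈ f.support, V (monomial d (coeff d f)) := by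
    intro n
    induction n with
    | zero =>
      intro f hcard _ d hd
      rw [Nat.le_zero, Finset.card_eq_zero] at hcard
      rw [hcard] at hd
      exact absurd hd (Finset.notMem_empty d)
    | succ n ih =>
      intro f hcard hf d hd
      set g := T f - C (Λ d) * f with hg
      have hgV : V g := hVsub _ _ (hTV f hf) (hVC _ _ hf)
      have hgcoeff : ∀ e, coeff e g = (Λ e - Λ d) * coeff e f := by
        intro e
        rw [hg, coeff_sub, hcoeff, coeff_C_mul, sub_mul]
      have hgsupp : g.support = f.support.erase d := by
        ext e
        simp only [mem_support_iff, Finset.mem_erase, hgcoeff]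
        constructor
        · intro h
          have h1 : coeff e f ≠ 0 := fun hc => h (by rw [hc, mul_zero])
          have h2 : e ≠ d := fun hc => h (by rw [hc, sub_self, zero_mul])
          exact ⟨h2, h1⟩
        · rintro ⟨h1, h2⟩
          exact mul_ne_zero (sub_ne_zero_of_ne fun hc => h1 (hΛinj hc)) h2
      have hmonoe : ∀ e ∈ f.support.erase d, V (monomial e (coeff e f)) := by
        intro e he
        have he' : e ∈ g.support := by rw [hgsupp]; exact he
        have hcard' : g.support.card ≤ n := by
          rw [hgsupp]
          have := Finset.card_erase_lt_of_mem hd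
          omega
        have hVe := ih g hcard' hgV e he'
        have hne : Λ e - Λ d ≠ 0 :=
          sub_ne_zero_of_ne fun hc => (Finset.mem_erase.mp he).1 (hΛinj hc)
        have hrw : monomial e (coeff e f) = C (Λ e - Λ d)⁻¹ * monomial e (coeff e g) := by
          rw [hgcoeff, C_mul_monomial, inv_mul_cancel_left₀ hne]
        rw [hrw]
        exact hVC _ _ hVe
      intro p hp
      have hsum : eval p f = ∑ e ∈ f.support, eval p (monomial e (coeff e f)) := by
        conv_lhs => rw [f.as_sum]
        rw [map_sum]
      have hsplit : eval p (monomial d (coeff d f))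
          = eval p f - ∑ e ∈ f.support.erase d, eval p (monomial e (coeff e f)) := by
        rw [hsum, ← Finset.add_sum_erase _ _ hd]
        ring
      rw [hsplit, hf p hp, Finset.sum_eq_zero (fun e he => hmonoe e he p hp), sub_zero]
  -- the monomial vanishing set
  have hmono1 : ∀ f, V f → ∀ d ∈ f.support, V (monomial d 1) := by
    intro f hf d hd
    have h1 := main f.support.card f le_rfl hf d hd
    have hc : coeff d f ≠ 0 := mem_support_iff.mp hd
    have hrw : (monomial d 1 : MvPolynomial (Fin 2) k)
        = C (coeff d f)⁻¹ * monomial d (coeff d f) := by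
      rw [C_mul_monomial, inv_mul_cancel₀ hc]
    rw [hrw]
    exact hVC _ _ h1
  -- description of S by vanishing monomials
  have hSP : S = {p | ∀ d : Fin 2 →₀ ℕ, V (monomial d 1) → p 0 ^ d 0 * p 1 ^ d 1 = 0} := by
    ext p
    constructor
    · intro hp d hd
      have := hd p hp
      rwa [hm, one_mul] at this
    · intro hp
      rw [hSV]
      intro f hf
      rw [f.as_sum, map_sum]
      apply Finset.sum_eq_zero
      intro e he
      rw [hm, hp e (hmono1 f hf e he), mul_zero]
  have hzero : ∀ d : Fin 2 →₀ ℕ, d 0 = 0 → d 1 = 0 → d = 0 := by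
    intro d h0 h1
    ext i
    fin_cases i
    · simpa using h0
    · simpa using h1
  by_cases h0P : V (monomial (0 : Fin 2 →₀ ℕ) 1)
  · left
    rw [hSP]
    ext p
    simp only [Set.mem_setOf_eq, Set.mem_empty_iff_false, iff_false]
    intro hp
    have := hp 0 h0P
    simp at this
  · have hPnz : ∀ d : Fin 2 →₀ ℕ, V (monomial d 1) → d 0 ≠ 0 ∨ d 1 ≠ 0 := by
      intro d hd
      by_contra hc
      push_neg at hc
      rw [hzero d hc.1 hc.2] at hd
      exact h0P hd
    by_cases hA : ∃ dA : Fin 2 →₀ ℕ, V (monomial dA 1) ∧ dA 1 = 0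
    · obtain ⟨dA, hdA, hdA1⟩ := hA
      have hdA0 : dA 0 ≠ 0 := by
        rcases hPnz dA hdA with h | h
        · exact h
        · exact absurd hdA1 h
      by_cases hB : ∃ dB : Fin 2 →₀ ℕ, V (monomial dB 1) ∧ dB 0 = 0
      · obtain ⟨dB, hdB, hdB0⟩ := hB
        have hdB1 : dB 1 ≠ 0 := by
          rcases hPnz dB hdB with h | h
          · exact absurd hdB0 h
          · exact h
        right; left
        rw [hSP]
        ext p
        simp only [Set.mem_setOf_eq]
        constructor
        · intro hp
          constructor
          · have := hp dA hdA
            rw [hdA1, pow_zero, mul_one] at this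
            exact (pow_eq_zero_iff hdA0).mp this
          · have := hp dB hdB
            rw [hdB0, pow_zero, one_mul] at this
            exact (pow_eq_zero_iff hdB1).mp this
        · rintro ⟨h1, h2⟩ d hd
          rcases hPnz d hd with h | h
          · rw [h1, zero_pow h, zero_mul]
          · rw [h2, zero_pow h, mul_zero]
      · right; right; left
        rw [hSP]
        ext p
        simp only [Set.mem_setOf_eq]
        constructor
        · intro hp
          have := hp dA hdA
          rw [hdA1, pow_zero, mul_one] at this
          exact (pow_eq_zero_iff hdA0).mp this
        · intro h1 d hd
          have hd0 : d 0 ≠ 0 := fun hc => hB ⟨d, hd, hc⟩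
          rw [h1, zero_pow hd0, zero_mul]
    · have hP1 : ∀ d : Fin 2 →₀ ℕ, V (monomial d 1) → d 1 ≠ 0 :=
        fun d hd hc => hA ⟨d, hd, hc⟩
      by_cases hB : ∃ dB : Fin 2 →₀ ℕ, V (monomial dB 1) ∧ dB 0 = 0
      · obtain ⟨dB, hdB, hdB0⟩ := hB
        right; right; right; left
        rw [hSP]
        ext p
        simp only [Set.mem_setOf_eq]
        constructor
        · intro hp
          have := hp dB hdB
          rw [hdB0, pow_zero, one_mul] at this
          exact (pow_eq_zero_iff (hP1 dB hdB)).mp this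
        · intro h1 d hd
          rw [h1, zero_pow (hP1 d hd), mul_zero]
      · have hP0 : ∀ d : Fin 2 →₀ ℕ, V (monomial d 1) → d 0 ≠ 0 :=
          fun d hd hc => hB ⟨d, hd, hc⟩
        by_cases hPe : ∃ d : Fin 2 →₀ ℕ, V (monomial d 1)
        · obtain ⟨d₀, hd₀⟩ := hPe
          right; right; right; right; left
          rw [hSP]
          ext p
          simp only [Set.mem_setOf_eq]
          constructor
          · intro hp
            have := hp d₀ hd₀
            rcases mul_eq_zero.mp this with h | h
            · rw [(pow_eq_zero_iff (hP0 d₀ hd₀)).mp h, zero_mul]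
            · rw [(pow_eq_zero_iff (hP1 d₀ hd₀)).mp h, mul_zero]
          · intro h1 d hd
            rcases mul_eq_zero.mp h1 with h | h
            · rw [h, zero_pow (hP0 d hd), zero_mul]
            · rw [h, zero_pow (hP1 d hd), mul_zero]
        · right; right; right; right; right
          rw [hSP]
          ext p
          simp only [Set.mem_setOf_eq, Set.mem_univ, iff_true]
          intro d hd
          exact absurd ⟨d, hd⟩ hPe
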